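/- Let Z_1,...,Z_n be independent random variables with Z_k ~ Gamma(γ_k + n − k + 1, δ_k) (shape γ_k+n−k+1, rate δ_k), where γ_k>−1 and δ_k>0. Define M_1,...,M_n recursively via the Skibinsky array with recursion variables Z_1,...,Z_n (so M_k = g_{k,k}). Then the joint density of (M_1,...,M_n) at a point m⃗ in the interior of the moment space M_n([0,∞)) equals ∏_{k=1}^n (δ_k^{γ_k+n−k+1}/Γ(γ_k+n−k+1)) · z_k(m⃗)^{γ_k} · exp(−δ_k z_k(m⃗)), where z_k(m⃗) = (m_k − m_k^−)/(m_{k-1} − m_{k-1}^−) and m_k^− is the minimal k-th moment given m_1,...,m_{k-1}. Equivalently: the Jacobian determinant of the map m⃗_n ↦ (z_1,...,z_n) equals ∏_{k=1}^n z_k^{-(n-k)}. -/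

import Mathlib

open MeasureTheory ProbabilityTheory Set Filter

open Topology
open scoped ENNReal

/-- The extension of a vector to an `ℕ`-indexed sequence, as used in the statement. -/
noncomputable def skExt (n : ℕ) (v : Fin n → ℝ) : ℕ → ℝ :=
  fun i => if hi : i - 1 < n then v ⟨i - 1, hi⟩ else 1

lemma skExt_apply {n : ℕ} (v : Fin n → ℝ) (t : ℕ) (htn : t - 1 < n) :
    skExt n v t = v ⟨t - 1, htn⟩ := by
  simp [skExt, dif_pos htn]

section g
variable {n : ℕ} (g : ℕ → ℕ → (ℕ → ℝ) → ℝ)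
  (h_zero : ∀ i j z, j < i → g i j z = 0)
  (h_top : ∀ j z, g 0 j z = 1)
  (h_rec : ∀ i j : ℕ, ∀ z : ℕ → ℝ, 1 ≤ i → i ≤ j →
    g i j z = g i (j - 1) z + z (j - i + 1) * g (i - 1) j z)

include h_zero h_top h_rec

lemma sk_congr : ∀ N i j (z z' : ℕ → ℝ), i + j ≤ N →
    (∀ t, 1 ≤ t → t ≤ j → z t = z' t) → g i j z = g i j z' := by
  intro N
  induction N with
  | zero =>
    intro i j z z' hN _
    have hi : i = 0 := by omega
    subst hi; rw [h_top, h_top]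
  | succ N ih =>
    intro i j z z' hN hz
    rcases Nat.eq_zero_or_pos i with hi | hi
    · subst hi; rw [h_top, h_top]
    rcases lt_or_ge j i with hj | hj
    · rw [h_zero _ _ _ hj, h_zero _ _ _ hj]
    rw [h_rec i j z hi hj, h_rec i j z' hi hj]
    have h1 : g i (j - 1) z = g i (j - 1) z' :=
      ih i (j - 1) z z' (by omega) (fun t ht1 ht2 => hz t ht1 (by omega))
    have h2 : g (i - 1) j z = g (i - 1) j z' :=
      ih (i - 1) j z z' (by omega) hz
    have h3 : z (j - i + 1) = z' (j - i + 1) := hz _ (by omega) (by omega)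
    rw [h1, h2, h3]

lemma sk_contDiff : ∀ N i j, i + j ≤ N →
    ContDiff ℝ ⊤ (fun v : Fin n → ℝ => g i j (skExt n v)) := by
  intro N
  induction N with
  | zero =>
    intro i j hN
    have hi : i = 0 := by omega
    subst hi
    simp only [h_top]
    exact contDiff_const
  | succ N ih =>
    intro i j hN
    rcases Nat.eq_zero_or_pos i with hi | hi
    · subst hi; simp only [h_top]; exact contDiff_const
    rcases lt_or_ge j i with hj | hj
    · simp only [h_zero _ _ _ hj]; exact contDiff_const
    have heq : (fun v : Fin n → ℝ => g i j (skExt n v)) =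
        fun v => g i (j - 1) (skExt n v) + skExt n v (j - i + 1) * g (i - 1) j (skExt n v) :=
      funext fun v => h_rec i j (skExt n v) hi hj
    rw [heq]
    have hc : ContDiff ℝ ⊤ (fun v : Fin n → ℝ => skExt n v (j - i + 1)) := by
      by_cases h : j - i + 1 - 1 < n
      · simp only [skExt, dif_pos h]
        exact (ContinuousLinearMap.proj (R := ℝ) (φ := fun _ : Fin n => ℝ)
          ⟨j - i + 1 - 1, h⟩).contDiff
      · simp only [skExt, dif_neg h]
        exact contDiff_const
    exact (ih i (j - 1) (by omega)).add (hc.mul (ih (i - 1) j (by omega)))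

/-- Invariance in high coordinates. -/
lemma sk_update (i j : ℕ) (v : Fin n → ℝ) (k : Fin n) (c : ℝ) (hjk : j ≤ (k : ℕ)) :
    g i j (skExt n (Function.update v k c)) = g i j (skExt n v) := by
  apply sk_congr g h_zero h_top h_rec (i + j) i j _ _ le_rfl
  intro t ht1 ht2
  simp only [skExt]
  by_cases h : t - 1 < n
  · rw [dif_pos h, dif_pos h, Function.update_of_ne]
    exact Fin.ne_of_val_ne (by simp only [Fin.val_mk]; omega)
  · rw [dif_neg h, dif_neg h]

end g

/-- If a function is invariant under changing the `k`-th coordinate, its partial derivative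
in the `k`-th direction vanishes. -/
lemma fderiv_single_eq_zero {n : ℕ} {F : (Fin n → ℝ) → ℝ} {v : Fin n → ℝ} {k : Fin n}
    (hF : DifferentiableAt ℝ F v) (h : ∀ w c, F (Function.update w k c) = F w) :
    fderiv ℝ F v (Pi.single k 1) = 0 := by
  set d : Fin n → ℝ := Pi.single k 1 with hd
  have hline : (fun t : ℝ => F (v + t • d)) = fun _ => F v := by
    funext t
    have h1 : v + t • d = Function.update v k (v k + t) := by
      funext j
      by_cases hj : j = k
      · subst hj; simp [hd]
      · simp [hd, Function.update_of_ne hj, Pi.single_apply, hj]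
    rw [h1, h]
  have hγ : HasDerivAt (fun t : ℝ => v + t • d) d 0 := by
    have h2 : HasDerivAt (fun t : ℝ => t • d) ((1 : ℝ) • d) 0 :=
      (hasDerivAt_id (0 : ℝ)).smul_const d
    have h3 := h2.const_add v
    simpa using h3
  have hF' : HasFDerivAt F (fderiv ℝ F v) ((fun t : ℝ => v + t • d) 0) := by
    simpa using hF.hasFDerivAt
  have hcomp : HasDerivAt (fun t : ℝ => F (v + t • d)) (fderiv ℝ F v d) 0 :=
    hF'.comp_hasDerivAt 0 hγ
  rw [hline] at hcomp
  exact hcomp.unique (hasDerivAt_const _ _)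

section g2
variable {n : ℕ} (g : ℕ → ℕ → (ℕ → ℝ) → ℝ)
  (h_zero : ∀ i j z, j < i → g i j z = 0)
  (h_top : ∀ j z, g 0 j z = 1)
  (h_rec : ∀ i j : ℕ, ∀ z : ℕ → ℝ, 1 ≤ i → i ≤ j →
    g i j z = g i (j - 1) z + z (j - i + 1) * g (i - 1) j z)

include h_zero h_top h_rec

lemma sk_diffAt (i j : ℕ) (v : Fin n → ℝ) :
    DifferentiableAt ℝ (fun v : Fin n → ℝ => g i j (skExt n v)) v :=
  ((sk_contDiff g h_zero h_top h_rec (i + j) i j le_rfl).differentiable (by simp)).differentiableAt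

/-- The top partial derivative of the Skibinsky array entries. -/
lemma sk_deriv_top (m : ℕ) (hm1 : 1 ≤ m) (hmn : m ≤ n) (v : Fin n → ℝ) :
    ∀ i, 1 ≤ i → i ≤ m →
    fderiv ℝ (fun v : Fin n → ℝ => g i m (skExt n v)) v
        (Pi.single (⟨m - 1, by omega⟩ : Fin n) 1) =
      ∏ r : Fin n, if m - i ≤ (r : ℕ) ∧ (r : ℕ) < m - 1 then v r else 1 := by
  intro i
  induction i with
  | zero => omega
  | succ i ih =>
    intro _ him
    set km : Fin n := ⟨m - 1, by omega⟩ with hkm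
    have heq : (fun v : Fin n → ℝ => g (i + 1) m (skExt n v)) =
        fun v => g (i + 1) (m - 1) (skExt n v) +
          v ⟨m - (i + 1) + 1 - 1, by omega⟩ * g i m (skExt n v) := by
      funext w
      rw [h_rec (i + 1) m (skExt n w) (by omega) him,
        skExt_apply w (m - (i + 1) + 1) (by omega)]
      simp
    set idx : Fin n := ⟨m - (i + 1) + 1 - 1, by omega⟩ with hidx
    have hidxval : (idx : ℕ) = m - (i + 1) := by
      simp only [hidx]
      show m - (i + 1) + 1 - 1 = m - (i + 1)
      omega
    have hdG1 : DifferentiableAt ℝ (fun v : Fin n → ℝ => g (i + 1) (m - 1) (skExt n v)) v :=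
      sk_diffAt g h_zero h_top h_rec _ _ v
    have hdp : DifferentiableAt ℝ (fun w : Fin n → ℝ => w idx) v :=
      (ContinuousLinearMap.proj (R := ℝ) (φ := fun _ : Fin n => ℝ) idx).differentiableAt
    have hdG2 : DifferentiableAt ℝ (fun v : Fin n → ℝ => g i m (skExt n v)) v :=
      sk_diffAt g h_zero h_top h_rec _ _ v
    rw [heq, fderiv_fun_add hdG1 (hdp.fun_mul hdG2), fderiv_fun_mul hdp hdG2]
    have hzero1 : fderiv ℝ (fun v : Fin n → ℝ => g (i + 1) (m - 1) (skExt n v)) v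
        (Pi.single km 1) = 0 := by
      apply fderiv_single_eq_zero hdG1
      intro w c
      exact sk_update g h_zero h_top h_rec (i + 1) (m - 1) w km c (by simp [hkm])
    have hproj : fderiv ℝ (fun w : Fin n → ℝ => w idx) v =
        ContinuousLinearMap.proj (R := ℝ) (φ := fun _ : Fin n => ℝ) idx :=
      (ContinuousLinearMap.proj (R := ℝ) (φ := fun _ : Fin n => ℝ) idx).fderiv
    simp only [ContinuousLinearMap.add_apply, ContinuousLinearMap.smul_apply, hzero1, hproj,
      ContinuousLinearMap.proj_apply, smul_eq_mul, zero_add]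
    rcases Nat.eq_zero_or_pos i with hi0 | hi0
    · -- base case i+1 = 1
      subst hi0
      have hzero2 : fderiv ℝ (fun v : Fin n → ℝ => g 0 m (skExt n v)) v = 0 := by
        have h1 : (fun v : Fin n → ℝ => g 0 m (skExt n v)) = fun _ => (1:ℝ) :=
          funext fun w => h_top m _
        rw [h1]
        exact fderiv_const_apply 1
      have hidx' : idx = km := by
        apply Fin.ext
        rw [hidxval]
      have hsing : (Pi.single km 1 : Fin n → ℝ) idx = 1 := by
        rw [hidx']; simp
      rw [hzero2, h_top m (skExt n v), hsing]
      simp only [ContinuousLinearMap.zero_apply, mul_zero, zero_add, one_mul]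
      have hone : ∀ r : Fin n, (if m - 1 ≤ (r : ℕ) ∧ (r : ℕ) < m - 1 then v r else 1) = 1 := by
        intro r; rw [if_neg]; omega
      rw [Finset.prod_congr rfl (fun r _ => hone r), Finset.prod_const_one]
    · -- inductive step, i ≥ 1
      have hIH := ih hi0 (by omega)
      have hsing : (Pi.single km 1 : Fin n → ℝ) idx = 0 := by
        rw [Pi.single_apply, if_neg]
        intro hcon
        rw [Fin.ext_iff, hidxval] at hcon
        simp only [hkm] at hcon
        omega
      rw [hIH, hsing, mul_zero, add_zero]
      have hfac : ∀ r : Fin n,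
          (if m - (i + 1) ≤ (r : ℕ) ∧ (r : ℕ) < m - 1 then v r else 1) =
            (if r = idx then v r else 1) *
              (if m - i ≤ (r : ℕ) ∧ (r : ℕ) < m - 1 then v r else 1) := by
        intro r
        by_cases hr : r = idx
        · subst hr
          rw [if_pos ⟨by omega, by rw [hidxval]; omega⟩, if_pos rfl,
            if_neg (by rw [hidxval]; omega), mul_one]
        · have hval : (r : ℕ) ≠ m - (i + 1) := by
            intro hcon; exact hr (Fin.ext (by rw [hidxval, hcon]))
          rw [if_neg hr, one_mul]
          by_cases hcond : m - i ≤ (r : ℕ) ∧ (r : ℕ) < m - 1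
          · rw [if_pos hcond, if_pos (by omega)]
          · rw [if_neg hcond, if_neg (by omega)]
      rw [Finset.prod_congr rfl (fun r _ => hfac r), Finset.prod_mul_distrib,
        Finset.prod_ite_eq' Finset.univ idx v]
      simp

end g2

section g3
variable {n : ℕ} (g : ℕ → ℕ → (ℕ → ℝ) → ℝ)
  (h_zero : ∀ i j z, j < i → g i j z = 0)
  (h_top : ∀ j z, g 0 j z = 1)
  (h_rec : ∀ i j : ℕ, ∀ z : ℕ → ℝ, 1 ≤ i → i ≤ j →
    g i j z = g i (j - 1) z + z (j - i + 1) * g (i - 1) j z)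

include h_zero h_top h_rec

lemma sk_Phi_contDiff :
    ContDiff ℝ ⊤ (fun (v : Fin n → ℝ) (j : Fin n) => g ((j : ℕ) + 1) ((j : ℕ) + 1) (skExt n v)) :=
  contDiff_pi.2 fun j => sk_contDiff g h_zero h_top h_rec _ ((j : ℕ) + 1) ((j : ℕ) + 1) le_rfl

lemma sk_Phi_det (v : Fin n → ℝ) :
    (fderiv ℝ (fun (v : Fin n → ℝ) (j : Fin n) =>
        g ((j : ℕ) + 1) ((j : ℕ) + 1) (skExt n v)) v).det =
      ∏ r : Fin n, v r ^ (n - 1 - (r : ℕ)) := by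
  set Φf : (Fin n → ℝ) → (Fin n → ℝ) :=
    fun v j => g ((j : ℕ) + 1) ((j : ℕ) + 1) (skExt n v) with hΦf
  have hdiff : ∀ j : Fin n,
      DifferentiableAt ℝ (fun v : Fin n → ℝ => g ((j : ℕ) + 1) ((j : ℕ) + 1) (skExt n v)) v :=
    fun j => sk_diffAt g h_zero h_top h_rec _ _ v
  have hpi : fderiv ℝ Φf v = ContinuousLinearMap.pi
      (fun j : Fin n => fderiv ℝ (fun v : Fin n → ℝ =>
        g ((j : ℕ) + 1) ((j : ℕ) + 1) (skExt n v)) v) :=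
    fderiv_pi hdiff
  have hentry : ∀ j k : Fin n,
      LinearMap.toMatrix' ((fderiv ℝ Φf v) : (Fin n → ℝ) →ₗ[ℝ] (Fin n → ℝ)) j k =
        fderiv ℝ (fun v : Fin n → ℝ => g ((j : ℕ) + 1) ((j : ℕ) + 1) (skExt n v)) v
          (Pi.single k 1) := by
    intro j k
    rw [LinearMap.toMatrix'_apply]
    have h1 : (fun j' : Fin n => if j' = k then (1:ℝ) else 0) = Pi.single k 1 := by
      funext j'; rw [Pi.single_apply]
    show (fderiv ℝ Φf v) (Pi.single k 1) j = _
    rw [hpi]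
    rfl
  have hdet : (fderiv ℝ Φf v).det =
      (LinearMap.toMatrix' ((fderiv ℝ Φf v) : (Fin n → ℝ) →ₗ[ℝ] (Fin n → ℝ))).det :=
    (LinearMap.det_toMatrix' _).symm
  rw [hdet]
  have htri : (LinearMap.toMatrix'
      ((fderiv ℝ Φf v) : (Fin n → ℝ) →ₗ[ℝ] (Fin n → ℝ))).BlockTriangular OrderDual.toDual := by
    intro j k hjk
    rw [hentry j k]
    apply fderiv_single_eq_zero (hdiff j)
    intro w c
    exact sk_update g h_zero h_top h_rec ((j : ℕ) + 1) ((j : ℕ) + 1) w k c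
      (by have : (j : ℕ) < (k : ℕ) := hjk; omega)
  rw [Matrix.det_of_lowerTriangular _ htri]
  have hdiag : ∀ j : Fin n,
      LinearMap.toMatrix' ((fderiv ℝ Φf v) : (Fin n → ℝ) →ₗ[ℝ] (Fin n → ℝ)) j j =
        ∏ r : Fin n, if (r : ℕ) < (j : ℕ) then v r else 1 := by
    intro j
    rw [hentry j j]
    have hj : (⟨(j : ℕ) + 1 - 1, by omega⟩ : Fin n) = j := Fin.ext (by simp)
    have := sk_deriv_top g h_zero h_top h_rec ((j : ℕ) + 1) (by omega) (by omega) v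
      ((j : ℕ) + 1) (by omega) le_rfl
    rw [hj] at this
    rw [this]
    refine Finset.prod_congr rfl fun r _ => ?_
    by_cases hr : (r : ℕ) < (j : ℕ)
    · rw [if_pos ⟨by omega, by omega⟩, if_pos hr]
    · rw [if_neg (by omega), if_neg hr]
  rw [Finset.prod_congr rfl fun j _ => hdiag j, Finset.prod_comm]
  refine Finset.prod_congr rfl fun r _ => ?_
  have h2 : (∏ j : Fin n, if (r : ℕ) < (j : ℕ) then v r else 1) =
      ∏ j ∈ Finset.univ.filter (fun j : Fin n => (r : ℕ) < (j : ℕ)), v r :=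
    (Finset.prod_filter _ _).symm
  rw [h2, Finset.prod_const]
  have h3 : Finset.univ.filter (fun j : Fin n => (r : ℕ) < (j : ℕ)) = Finset.Ioi r := by
    ext j; simp only [Finset.mem_filter, Finset.mem_univ, true_and, Finset.mem_Ioi, Fin.lt_def]
  rw [h3, Fin.card_Ioi]

end g3

lemma lintegral_pi_prod : ∀ (m : ℕ) (μ : Fin m → Measure ℝ), (∀ i, SigmaFinite (μ i)) →
    ∀ (f : Fin m → ℝ → ℝ≥0∞), (∀ i, Measurable (f i)) →
    ∫⁻ x, ∏ i, f i (x i) ∂(Measure.pi μ) = ∏ i, ∫⁻ y, f i y ∂(μ i) := by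
  intro m
  induction m with
  | zero =>
    intro μ _ f _
    simp only [Finset.univ_eq_empty, Finset.prod_empty]
    rw [lintegral_one, Measure.pi_univ, Finset.univ_eq_empty, Finset.prod_empty]
  | succ m ih =>
    intro μ hσ f hf
    haveI := hσ
    have hmp := MeasureTheory.measurePreserving_piFinSuccAbove μ 0
    set e := MeasurableEquiv.piFinSuccAbove (fun _ : Fin (m + 1) => ℝ) 0 with he
    have hmeas : Measurable (fun p : ℝ × (Fin m → ℝ) => f 0 p.1 * ∏ j, f j.succ (p.2 j)) := by
      apply ((hf 0).comp measurable_fst).mul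
      apply Finset.measurable_prod
      intro j _
      exact (hf j.succ).comp ((measurable_pi_apply j).comp measurable_snd)
    have key : ∀ x : Fin (m + 1) → ℝ,
        (∏ i, f i (x i)) = f 0 ((e x).1) * ∏ j : Fin m, f j.succ ((e x).2 j) := by
      intro x
      rw [Fin.prod_univ_succ]
      rfl
    calc ∫⁻ x, ∏ i, f i (x i) ∂(Measure.pi μ)
        = ∫⁻ x, (fun p : ℝ × (Fin m → ℝ) => f 0 p.1 * ∏ j, f j.succ (p.2 j)) (e x)
            ∂(Measure.pi μ) := by simp_rw [key]
      _ = ∫⁻ p, f 0 p.1 * ∏ j, f j.succ (p.2 j)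
            ∂((μ 0).prod (Measure.pi fun j : Fin m => μ ((0 : Fin (m+1)).succAbove j))) :=
          hmp.lintegral_comp hmeas
      _ = (∫⁻ y, f 0 y ∂(μ 0)) * ∫⁻ y, ∏ j : Fin m, f j.succ (y j)
            ∂(Measure.pi fun j : Fin m => μ ((0 : Fin (m+1)).succAbove j)) := by
          exact lintegral_prod_mul ((hf 0).aemeasurable)
            ((Finset.measurable_prod Finset.univ fun (j : Fin m) _ =>
              (hf j.succ).comp (measurable_pi_apply j)).aemeasurable)
      _ = (∫⁻ y, f 0 y ∂(μ 0)) * ∏ j : Fin m, ∫⁻ y, f j.succ y ∂(μ j.succ) := by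
          congr 1
          have h4 : (fun j : Fin m => μ ((0 : Fin (m+1)).succAbove j)) = fun j => μ j.succ := by
            funext j; rw [Fin.succAbove_zero]
          rw [h4]
          exact ih _ (fun j => inferInstance) _ (fun j => hf j.succ)
      _ = ∏ i, ∫⁻ y, f i y ∂(μ i) :=
          (Fin.prod_univ_succ (fun i : Fin (m+1) => ∫⁻ y, f i y ∂(μ i))).symm

lemma pi_withDensity (m : ℕ) (f : Fin m → ℝ → ℝ≥0∞) (hf : ∀ i, Measurable (f i))
    (hσ : ∀ i, SigmaFinite ((volume : Measure ℝ).withDensity (f i))) :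
    Measure.pi (fun i => (volume : Measure ℝ).withDensity (f i)) =
      (volume : Measure (Fin m → ℝ)).withDensity (fun x => ∏ i, f i (x i)) := by
  haveI := hσ
  refine Measure.pi_eq fun s hs => ?_
  rw [withDensity_apply _ (MeasurableSet.univ_pi hs),
    ← lintegral_indicator (MeasurableSet.univ_pi hs) _]
  have hind : ∀ x : Fin m → ℝ,
      (Set.univ.pi s).indicator (fun x => ∏ i, f i (x i)) x =
        ∏ i, (s i).indicator (f i) (x i) := by
    intro x
    by_cases hx : x ∈ Set.univ.pi s
    · rw [Set.indicator_of_mem hx]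
      exact Finset.prod_congr rfl fun i _ =>
        (Set.indicator_of_mem (hx i (Set.mem_univ i)) _).symm
    · rw [Set.indicator_of_notMem hx]
      rw [Set.mem_pi] at hx
      push_neg at hx
      obtain ⟨i, _, hi⟩ := hx
      exact (Finset.prod_eq_zero (Finset.mem_univ i)
        (Set.indicator_of_notMem hi _)).symm
  simp_rw [hind]
  rw [show (volume : Measure (Fin m → ℝ)) = Measure.pi fun _ => volume from volume_pi]
  rw [lintegral_pi_prod m _ (fun _ => inferInstance) _
    (fun i => (hf i).indicator (hs i))]
  · exact Finset.prod_congr rfl fun i _ => by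
      rw [lintegral_indicator (hs i) _, withDensity_apply _ (hs i)]

lemma map_withDensity_comp {α β : Type*} [MeasurableSpace α] [MeasurableSpace β] (ν : Measure α)
    {Φ : α → β} (hΦ : Measurable Φ) {H : β → ℝ≥0∞} (hH : Measurable H) :
    Measure.map Φ (ν.withDensity (fun x => H (Φ x))) = (Measure.map Φ ν).withDensity H := by
  ext t ht
  rw [Measure.map_apply hΦ ht, withDensity_apply _ (hΦ ht), withDensity_apply _ ht,
    setLIntegral_map ht hH hΦ]

/-- Let `Z₁, …, Zₙ` be independent with `Z_k ~ Gamma(γ_k + n - k + 1, δ_k)`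
(`γ_k > -1`, `δ_k > 0`) and define `M₁, …, Mₙ` via the Skibinsky array with recursion
variables `Z₁, …, Zₙ` (`M_k = g k k`), i.e. `(M₁,…,Mₙ) = Φ(Z₁,…,Zₙ)` where `Φ = ψₙ⁻¹`.
Then the joint law of `(M₁,…,Mₙ)` has, on the interior of the moment space `Mₙ([0,∞))`
(the image of the positive orthant under `Φ`), the Lebesgue density
`∏_{k=1}^n (δ_k^{γ_k+n-k+1} / Γ(γ_k+n-k+1)) z_k(m)^{γ_k} exp(-δ_k z_k(m))`,
where `z(m) = ψ(m)` is the inverse map. Equivalently, the Jacobian determinant of the map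
`m ↦ (z₁,…,zₙ)` equals `∏_{k=1}^n z_k^{-(n-k)}`. -/
theorem stmt_5 (n : ℕ) (hn : 1 ≤ n) (γ δ : Fin n → ℝ)
    (hγ : ∀ k, -1 < γ k) (hδ : ∀ k, 0 < δ k)
    (g : ℕ → ℕ → (ℕ → ℝ) → ℝ)
    (h_zero : ∀ i j z, j < i → g i j z = 0)
    (h_top : ∀ j z, g 0 j z = 1)
    (h_rec : ∀ i j : ℕ, ∀ z : ℕ → ℝ, 1 ≤ i → i ≤ j →
      g i j z = g i (j - 1) z + z (j - i + 1) * g (i - 1) j z)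
    -- `Φ = ψₙ⁻¹ : (z₁,…,zₙ) ↦ (m₁,…,mₙ)` via the Skibinsky array
    (Φ : (Fin n → ℝ) → (Fin n → ℝ))
    (hΦ : ∀ v : Fin n → ℝ, ∀ j : Fin n,
      Φ v j = g (j + 1) (j + 1) (fun i => if hi : i - 1 < n then v ⟨i - 1, hi⟩ else 1))
    -- `ψ : m ↦ (z₁,…,zₙ)`, the inverse of `Φ` on the positive orthant
    (ψ : (Fin n → ℝ) → (Fin n → ℝ))
    (hψ : ∀ v : Fin n → ℝ, (∀ k, 0 < v k) → ψ (Φ v) = v) :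
    Measure.map Φ (Measure.pi (fun k : Fin n => gammaMeasure (γ k + n - k) (δ k))) =
      volume.withDensity (Set.indicator (Φ '' {v : Fin n → ℝ | ∀ k, 0 < v k}) (fun m =>
        ENNReal.ofReal (∏ k : Fin n,
          δ k ^ (γ k + n - k) / Real.Gamma (γ k + n - k) *
            (ψ m k ^ (γ k) * Real.exp (-δ k * ψ m k))))) ∧
    ∀ v : Fin n → ℝ, (∀ k, 0 < v k) →
      (fderiv ℝ ψ (Φ v)).det = ∏ k : Fin n, v k ^ (-((n : ℤ) - (k + 1))) := by
  classical
  have hΦfun : Φ = fun (v : Fin n → ℝ) (j : Fin n) =>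
      g ((j : ℕ) + 1) ((j : ℕ) + 1) (skExt n v) := by
    funext v j
    rw [hΦ v j]
    rfl
  subst hΦfun
  set Φf : (Fin n → ℝ) → (Fin n → ℝ) := fun (v : Fin n → ℝ) (j : Fin n) =>
    g ((j : ℕ) + 1) ((j : ℕ) + 1) (skExt n v) with hΦf
  set s : Set (Fin n → ℝ) := {v : Fin n → ℝ | ∀ k, 0 < v k} with hsdef
  have hs_open : IsOpen s := by
    have : s = Set.pi Set.univ (fun _ : Fin n => Set.Ioi (0:ℝ)) := by
      ext x; simp [hsdef, Set.mem_pi]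
    rw [this]
    exact isOpen_set_pi Set.finite_univ (fun i _ => isOpen_Ioi)
  have hs_meas : MeasurableSet s := hs_open.measurableSet
  have hcd : ContDiff ℝ ⊤ Φf := sk_Phi_contDiff g h_zero h_top h_rec
  have hΦmeas : Measurable Φf := hcd.continuous.measurable
  have hdet : ∀ w : Fin n → ℝ, (fderiv ℝ Φf w).det = ∏ r : Fin n, w r ^ (n - 1 - (r : ℕ)) :=
    sk_Phi_det g h_zero h_top h_rec
  have hdet_pos : ∀ w, w ∈ s → 0 < ∏ r : Fin n, w r ^ (n - 1 - (r : ℕ)) := by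
    intro w hw
    exact Finset.prod_pos fun r _ => pow_pos (hw r) _
  have hinj : Set.InjOn Φf s := by
    intro a ha b hb hab
    calc a = ψ (Φf a) := (hψ a ha).symm
      _ = ψ (Φf b) := by rw [hab]
      _ = b := hψ b hb
  -- key local-inverse package
  have key : ∀ v, v ∈ s → ContinuousAt ψ (Φf v) ∧
      (fderiv ℝ ψ (Φf v)).det = ((fderiv ℝ Φf v).det)⁻¹ ∧
      Filter.map Φf (𝓝 v) = 𝓝 (Φf v) := by
    intro v hv
    have hdetne : (fderiv ℝ Φf v).det ≠ 0 := by
      rw [hdet v]; exact ne_of_gt (hdet_pos v hv)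
    set L := fderiv ℝ Φf v with hL
    let eqv : (Fin n → ℝ) ≃L[ℝ] (Fin n → ℝ) :=
      (LinearMap.equivOfDetNeZero (L : (Fin n → ℝ) →ₗ[ℝ] (Fin n → ℝ)) hdetne).toContinuousLinearEquiv
    have heqv : (eqv : (Fin n → ℝ) →L[ℝ] (Fin n → ℝ)) = L := by
      ext x
      rfl
    have hstrict : HasStrictFDerivAt Φf (eqv : (Fin n → ℝ) →L[ℝ] (Fin n → ℝ)) v := by
      rw [heqv]
      exact (hcd.contDiffAt).hasStrictFDerivAt (by simp)
    have hlocal : ∀ᶠ x in 𝓝 v, ψ (Φf x) = x := by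
      filter_upwards [hs_open.mem_nhds hv] with x hx
      exact hψ x hx
    have hψd : HasStrictFDerivAt ψ ((eqv.symm : (Fin n → ℝ) →L[ℝ] (Fin n → ℝ))) (Φf v) :=
      hstrict.to_local_left_inverse hlocal
    refine ⟨hψd.hasFDerivAt.differentiableAt.continuousAt, ?_, hstrict.map_nhds_eq_of_equiv⟩
    rw [hψd.hasFDerivAt.fderiv, ContinuousLinearEquiv.det_coe_symm, heqv]
  have hopen : IsOpen (Φf '' s) := by
    rw [isOpen_iff_mem_nhds]
    rintro m ⟨v, hv, rfl⟩
    rw [← (key v hv).2.2]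
    exact Filter.mem_map.2 (Filter.mem_of_superset (hs_open.mem_nhds hv)
      (Set.subset_preimage_image Φf s))
  constructor
  · -- the density identity
    have ha_pos : ∀ k : Fin n, (0:ℝ) < γ k + n - k := by
      intro k
      have h1 := hγ k
      have h2 : ((k:ℕ):ℝ) + 1 ≤ (n:ℝ) := by exact_mod_cast k.isLt
      linarith
    have hprob : ∀ k : Fin n, IsProbabilityMeasure (gammaMeasure (γ k + n - k) (δ k)) :=
      fun k => isProbabilityMeasure_gammaMeasure (ha_pos k) (hδ k)
    have hρmeas : ∀ k : Fin n, Measurable (gammaPDF (γ k + n - k) (δ k)) :=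
      fun k => (measurable_gammaPDFReal _ _).ennreal_ofReal
    have h1 : Measure.pi (fun k : Fin n => gammaMeasure (γ k + n - k) (δ k)) =
        (volume : Measure (Fin n → ℝ)).withDensity
          (fun x => ∏ k, gammaPDF (γ k + n - k) (δ k) (x k)) := by
      exact pi_withDensity n (fun k => gammaPDF (γ k + n - k) (δ k)) hρmeas
        (fun k => by
          have := hprob k
          exact (inferInstance : SigmaFinite (gammaMeasure (γ k + n - k) (δ k))))
    have hhyper : ∀ k : Fin n, (volume : Measure (Fin n → ℝ)) {x : Fin n → ℝ | x k = 0} = 0 := by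
      intro k
      have hset : {x : Fin n → ℝ | x k = 0} =
          Set.pi Set.univ (fun i => if i = k then ({0} : Set ℝ) else Set.univ) := by
        ext x
        simp only [Set.mem_setOf_eq, Set.mem_pi, Set.mem_univ, forall_true_left]
        constructor
        · intro h i
          by_cases hi : i = k
          · subst hi; simp [h]
          · simp [hi]
        · intro h
          have := h k
          simpa using this
      rw [hset, volume_pi_pi]
      exact Finset.prod_eq_zero (Finset.mem_univ k) (by simp)
    have hnullU : (volume : Measure (Fin n → ℝ)) (⋃ k, {x : Fin n → ℝ | x k = 0}) = 0 :=
      measure_iUnion_null hhyper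
    have hae : (fun x : Fin n → ℝ => ∏ k, gammaPDF (γ k + n - k) (δ k) (x k))
        =ᵐ[(volume : Measure (Fin n → ℝ))]
        s.indicator (fun x => ∏ k, gammaPDF (γ k + n - k) (δ k) (x k)) := by
      refine ae_iff.2 (measure_mono_null ?_ hnullU)
      intro x hx
      simp only [Set.mem_setOf_eq] at hx
      by_contra hc
      simp only [Set.mem_iUnion, Set.mem_setOf_eq] at hc
      push_neg at hc
      apply hx
      by_cases hxs : x ∈ s
      · rw [Set.indicator_of_mem hxs]
      · rw [Set.indicator_of_notMem hxs]
        have hex : ∃ k, ¬ (0 < x k) := by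
          by_contra hall; push_neg at hall; exact hxs hall
        obtain ⟨k, hk⟩ := hex
        have hneg : x k < 0 := lt_of_le_of_ne (not_lt.1 hk) (hc k)
        exact Finset.prod_eq_zero (Finset.mem_univ k) (gammaPDF_of_neg hneg)
    have hJmeas : Measurable (fun x : Fin n → ℝ => ENNReal.ofReal |(fderiv ℝ Φf x).det|) := by
      have hcont : Continuous fun x : Fin n → ℝ => (fderiv ℝ Φf x).det :=
        ContinuousLinearMap.continuous_det.comp (hcd.continuous_fderiv (by simp))
      exact hcont.abs.measurable.ennreal_ofReal
    set hE : (Fin n → ℝ) → ℝ≥0∞ := fun m => ENNReal.ofReal (∏ k : Fin n,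
      δ k ^ (γ k + n - k) / Real.Gamma (γ k + n - k) *
        (ψ m k ^ (γ k) * Real.exp (-δ k * ψ m k))) with hEdef
    have hψctsOn : ContinuousOn ψ (Φf '' s) := by
      rintro m ⟨v, hv, rfl⟩
      exact ((key v hv).1).continuousWithinAt
    have hψmaps : Set.MapsTo ψ (Φf '' s) s := by
      rintro m ⟨v, hv, rfl⟩
      rw [hψ v hv]; exact hv
    have hFcont : ContinuousOn (fun w : Fin n → ℝ => ∏ k : Fin n,
        δ k ^ (γ k + n - k) / Real.Gamma (γ k + n - k) *
          (w k ^ (γ k) * Real.exp (-δ k * w k))) s := by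
      apply continuousOn_finset_prod
      intro k _
      apply continuousOn_const.mul
      apply ContinuousOn.mul
      · exact ((continuous_apply k).continuousOn).rpow_const (fun w hw => Or.inl (ne_of_gt (hw k)))
      · exact (Real.continuous_exp.comp (continuous_const.mul (continuous_apply k))).continuousOn
    have hEcont : ContinuousOn hE (Φf '' s) :=
      ENNReal.continuous_ofReal.comp_continuousOn (hFcont.comp hψctsOn hψmaps)
    have hHmeas : Measurable ((Φf '' s).indicator hE) := by
      have hpw : (Φf '' s).indicator hE = Set.piecewise (Φf '' s) hE 0 := rfl
      rw [hpw]
      exact ContinuousOn.measurable_piecewise hEcont continuous_zero.continuousOn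
        hopen.measurableSet
    have hpoint : ∀ x ∈ s, (∏ k, gammaPDF (γ k + n - k) (δ k) (x k)) =
        ENNReal.ofReal |(fderiv ℝ Φf x).det| * (Φf '' s).indicator hE (Φf x) := by
      intro x hx
      have hHx : (Φf '' s).indicator hE (Φf x) = ENNReal.ofReal
          (∏ k : Fin n, δ k ^ (γ k + n - k) / Real.Gamma (γ k + n - k) *
            (x k ^ (γ k) * Real.exp (-δ k * x k))) := by
        rw [Set.indicator_of_mem (Set.mem_image_of_mem Φf hx), hEdef]
        simp only
        rw [hψ x hx]
      rw [hHx, hdet x, abs_of_pos (hdet_pos x hx),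
        ← ENNReal.ofReal_mul (le_of_lt (hdet_pos x hx))]
      have hL : (∏ k, gammaPDF (γ k + n - k) (δ k) (x k)) =
          ENNReal.ofReal (∏ k, gammaPDFReal (γ k + n - k) (δ k) (x k)) :=
        (ENNReal.ofReal_prod_of_nonneg (fun k _ => gammaPDFReal_nonneg (ha_pos k) (hδ k) _)).symm
      rw [hL]
      congr 1
      rw [← Finset.prod_mul_distrib]
      refine Finset.prod_congr rfl fun k _ => ?_
      have hxk : 0 < x k := hx k
      simp only [gammaPDFReal, if_pos (le_of_lt hxk)]
      have hkn : (k : ℕ) < n := k.isLt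
      have hcast : ((n - 1 - (k : ℕ) : ℕ) : ℝ) = (n : ℝ) - 1 - ((k : ℕ) : ℝ) := by
        rw [Nat.cast_sub (by omega : (k:ℕ) ≤ n - 1), Nat.cast_sub (by omega : 1 ≤ n)]
        push_cast
        ring
      have hrpow : x k ^ ((γ k + n - k) - 1) = x k ^ (γ k) * x k ^ ((n - 1 - (k : ℕ) : ℕ)) := by
        rw [← Real.rpow_natCast (x k) (n - 1 - (k : ℕ)), hcast, ← Real.rpow_add hxk]
        ring_nf
      rw [hrpow, neg_mul]
      ring
    calc Measure.map Φf (Measure.pi fun k => gammaMeasure (γ k + n - k) (δ k))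
        = Measure.map Φf (((volume.restrict s).withDensity
            (fun x => ENNReal.ofReal |(fderiv ℝ Φf x).det|)).withDensity
            (fun x => (Φf '' s).indicator hE (Φf x))) := by
          rw [h1, withDensity_congr_ae hae, withDensity_indicator hs_meas,
            withDensity_congr_ae ((ae_restrict_iff' hs_meas).2
              (Filter.Eventually.of_forall hpoint)),
            show (fun x => ENNReal.ofReal |(fderiv ℝ Φf x).det| *
                (Φf '' s).indicator hE (Φf x)) =
              (fun x => ENNReal.ofReal |(fderiv ℝ Φf x).det|) *
                (fun x => (Φf '' s).indicator hE (Φf x)) from rfl,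
            withDensity_mul _ hJmeas
              (show Measurable fun x => (Φf '' s).indicator hE (Φf x) from hHmeas.comp hΦmeas)]
      _ = (Measure.map Φf ((volume.restrict s).withDensity
            (fun x => ENNReal.ofReal |(fderiv ℝ Φf x).det|))).withDensity
            ((Φf '' s).indicator hE) :=
          map_withDensity_comp _ hΦmeas hHmeas
      _ = (volume.restrict (Φf '' s)).withDensity ((Φf '' s).indicator hE) := by
          rw [map_withDensity_abs_det_fderiv_eq_addHaar volume hs_meas.nullMeasurableSet
            (fun x _ => ((hcd.differentiable (by simp)) x).hasFDerivAt.hasFDerivWithinAt)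
            hinj]
      _ = (volume.restrict (Φf '' s)).withDensity hE := by
          apply withDensity_congr_ae
          refine (ae_restrict_iff' hopen.measurableSet).mpr ?_
          exact Filter.Eventually.of_forall fun m hm => Set.indicator_of_mem hm hE
      _ = volume.withDensity ((Φf '' s).indicator hE) :=
          (withDensity_indicator hopen.measurableSet hE).symm
  · -- the Jacobian determinant claim
    intro v hv
    rw [(key v hv).2.1, hdet v, ← Finset.prod_inv_distrib]
    refine Finset.prod_congr rfl fun k _ => ?_
    have hk : (k : ℕ) < n := k.isLt
    have hcast : -((n : ℤ) - ((k : ℕ) + 1)) = -((n - 1 - (k : ℕ) : ℕ) : ℤ) := by omega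
    rw [hcast, zpow_neg, zpow_natCast]
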